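/- Let K be a field and K[y] the polynomial ring in one variable y. A finite set G = {g₁,…,g_m} of nonzero polynomials in T = K[y,x₁,…,x_n] is a Gröbner basis (over the field K) with respect to an elimination order with the x variables larger than y if and only if G is a strong Gröbner basis in Q = (K[y])[x₁,…,x_n]: for every nonzero f in the ideal generated by G, there exist h ∈ K[y], a monomial x^α, and gᵢ ∈ G with LT_x(f) = h·x^α·LT_x(gᵢ). -/

import Mathlib

/-- The leading exponent (leading monomial) of `f` w.r.t. the monomial order `m`. -/
noncomputable def mdeg {σ R : Type*} [CommSemiring R] (m : MonomialOrder σ)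
    (f : MvPolynomial σ R) : σ →₀ ℕ :=
  m.toSyn.symm (f.support.sup fun d => m.toSyn d)

/-- The leading coefficient of `f` w.r.t. the monomial order `m`. -/
noncomputable def mlc {σ R : Type*} [CommSemiring R] (m : MonomialOrder σ)
    (f : MvPolynomial σ R) : R :=
  MvPolynomial.coeff (mdeg m f) f

/-- The leading term of `f` w.r.t. the monomial order `m`. -/
noncomputable def mlt {σ R : Type*} [CommSemiring R] (m : MonomialOrder σ)
    (f : MvPolynomial σ R) : MvPolynomial σ R :=
  MvPolynomial.monomial (mdeg m f) (mlc m f)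

open MvPolynomial

section helpers
variable {σ R : Type*} [CommSemiring R] {m : MonomialOrder σ}

lemma mdeg_mem_support {f : MvPolynomial σ R} (hf : f ≠ 0) : mdeg m f ∈ f.support := by
  obtain ⟨d, hd, hsup⟩ := Finset.exists_mem_eq_sup f.support
    (MvPolynomial.support_nonempty.mpr hf) (fun d => m.toSyn d)
  rw [mdeg, hsup, AddEquiv.symm_apply_apply]
  exact hd

lemma mlc_ne_zero {f : MvPolynomial σ R} (hf : f ≠ 0) : mlc m f ≠ 0 :=
  mem_support_iff.mp (mdeg_mem_support hf)

lemma le_mdeg {f : MvPolynomial σ R} {e : σ →₀ ℕ} (he : e ∈ f.support) :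
    m.toSyn e ≤ m.toSyn (mdeg m f) := by
  rw [mdeg, AddEquiv.apply_symm_apply]
  exact Finset.le_sup he

lemma mdeg_eq_of {f : MvPolynomial σ R} {a : σ →₀ ℕ} (h1 : coeff a f ≠ 0)
    (h2 : ∀ e ∈ f.support, m.toSyn e ≤ m.toSyn a) : mdeg m f = a := by
  have hf : f ≠ 0 := fun h => h1 (by simp [h])
  have h3 := le_mdeg (m := m) (mem_support_iff.mpr h1)
  have h4 := h2 _ (mdeg_mem_support (m := m) hf)
  exact m.toSyn.injective (le_antisymm h4 h3)

lemma mdeg_monomial {d : σ →₀ ℕ} {c : R} (hc : c ≠ 0) :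
    mdeg m (monomial d c) = d := by
  classical
  apply mdeg_eq_of (by rwa [coeff_monomial, if_pos rfl])
  intro e he
  rw [support_monomial, if_neg hc, Finset.mem_singleton] at he
  exact le_of_eq (congrArg _ he)

lemma mlc_monomial {d : σ →₀ ℕ} {c : R} : mlc m (monomial d c) = c := by
  rcases eq_or_ne c 0 with rfl | hc
  · simp [mlc]
  · classical
    rw [mlc, mdeg_monomial hc, coeff_monomial, if_pos rfl]

lemma mlt_monomial {d : σ →₀ ℕ} {c : R} : mlt m (monomial d c) = monomial d c := by
  rcases eq_or_ne c 0 with rfl | hc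
  · simp [mlt, mlc]
  · rw [mlt, mdeg_monomial hc, mlc_monomial]

end helpers

section domain
set_option maxHeartbeats 1000000
variable {σ R : Type*} [CommRing R] [IsDomain R] {m : MonomialOrder σ}

lemma mdeg_mul {p q : MvPolynomial σ R} (hp : p ≠ 0) (hq : q ≠ 0) :
    mdeg m (p * q) = mdeg m p + mdeg m q := by
  classical
  have key : coeff (mdeg m p + mdeg m q) (p * q) = mlc m p * mlc m q := by
    rw [coeff_mul]
    rw [Finset.sum_eq_single_of_mem (mdeg m p, mdeg m q)
      (Finset.HasAntidiagonal.mem_antidiagonal.mpr rfl) ?_]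
    · rfl
    · rintro ⟨u, v⟩ huv hne
      rw [Finset.HasAntidiagonal.mem_antidiagonal] at huv
      by_contra hcon
      have hu : u ∈ p.support := by
        rw [mem_support_iff]; intro h; exact hcon (by simp [h])
      have hv : v ∈ q.support := by
        rw [mem_support_iff]; intro h; exact hcon (by simp [h])
      have h1 := le_mdeg (m := m) hu
      have h2 := le_mdeg (m := m) hv
      have hsum : m.toSyn u + m.toSyn v = m.toSyn (mdeg m p) + m.toSyn (mdeg m q) := by
        rw [← map_add, ← map_add, huv]
      have hu' : m.toSyn u = m.toSyn (mdeg m p) := by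
        by_contra h3
        exact absurd hsum (ne_of_lt (add_lt_add_of_lt_of_le (lt_of_le_of_ne h1 h3) h2))
      have hv' : m.toSyn v = m.toSyn (mdeg m q) := by
        by_contra h3
        exact absurd hsum (ne_of_lt (add_lt_add_of_le_of_lt h1 (lt_of_le_of_ne h2 h3)))
      exact hne (Prod.ext (m.toSyn.injective hu') (m.toSyn.injective hv'))
  apply mdeg_eq_of
  · rw [key]
    exact mul_ne_zero (mlc_ne_zero hp) (mlc_ne_zero hq)
  · intro e he
    obtain ⟨u, hu, v, hv, rfl⟩ := Finset.mem_add.mp (support_mul p q he)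
    rw [map_add, map_add]
    exact add_le_add (le_mdeg hu) (le_mdeg hv)

lemma mlc_mul {p q : MvPolynomial σ R} (hp : p ≠ 0) (hq : q ≠ 0) :
    mlc m (p * q) = mlc m p * mlc m q := by
  classical
  rw [mlc, mdeg_mul hp hq, coeff_mul, Finset.sum_eq_single_of_mem (mdeg m p, mdeg m q)
    (Finset.HasAntidiagonal.mem_antidiagonal.mpr rfl) ?_]
  · rfl
  · rintro ⟨u, v⟩ huv hne
    rw [Finset.HasAntidiagonal.mem_antidiagonal] at huv
    by_contra hcon
    have hu : u ∈ p.support := by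
      rw [mem_support_iff]; intro h; exact hcon (by simp [h])
    have hv : v ∈ q.support := by
      rw [mem_support_iff]; intro h; exact hcon (by simp [h])
    have h1 := le_mdeg (m := m) hu
    have h2 := le_mdeg (m := m) hv
    have hsum : m.toSyn u + m.toSyn v = m.toSyn (mdeg m p) + m.toSyn (mdeg m q) := by
      rw [← map_add, ← map_add, huv]
    have hu' : m.toSyn u = m.toSyn (mdeg m p) := by
      by_contra h3
      exact absurd hsum (ne_of_lt (add_lt_add_of_lt_of_le (lt_of_le_of_ne h1 h3) h2))
    have hv' : m.toSyn v = m.toSyn (mdeg m q) := by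
      by_contra h3
      exact absurd hsum (ne_of_lt (add_lt_add_of_le_of_lt h1 (lt_of_le_of_ne h2 h3)))
    exact hne (Prod.ext (m.toSyn.injective hu') (m.toSyn.injective hv'))

end domain


section phihelp
variable {K : Type*} [CommSemiring K] {n : ℕ}

local notation "φ" => MvPolynomial.sumAlgEquiv K (Fin n) (Fin 1)
local notation "pe" => (Finsupp.sumFinsuppEquivProdFinsupp :
  ((Fin n ⊕ Fin 1) →₀ ℕ) ≃ ((Fin n →₀ ℕ) × (Fin 1 →₀ ℕ)))

lemma sum_decomp (d : (Fin n ⊕ Fin 1) →₀ ℕ) :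
    d = (pe d).1.mapDomain Sum.inl + (pe d).2.mapDomain Sum.inr := by
  ext e
  cases e with
  | inl x =>
      rw [Finsupp.add_apply, Finsupp.mapDomain_apply Sum.inl_injective,
        Finsupp.mapDomain_notin_range _ _ (by simp), Finsupp.fst_sumFinsuppEquivProdFinsupp]
      simp
  | inr y =>
      rw [Finsupp.add_apply, Finsupp.mapDomain_notin_range _ _ (by simp),
        Finsupp.mapDomain_apply Sum.inr_injective, Finsupp.snd_sumFinsuppEquivProdFinsupp]
      simp

lemma phi_monomial (d : (Fin n ⊕ Fin 1) →₀ ℕ) (c : K) :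
    φ (monomial d c) = monomial (pe d).1 (monomial (pe d).2 c) := by
  conv_lhs => rw [sum_decomp d]
  rw [← one_mul c, ← monomial_mul, ← rename_monomial, ← rename_monomial]
  rw [map_mul]
  have h1 : φ ((rename Sum.inl) (monomial (pe d).1 (1 : K))) =
      monomial (pe d).1 (1 : MvPolynomial (Fin 1) K) := by
    have h := DFunLike.congr_fun (sumAlgEquiv_comp_rename_inl K (Fin n) (Fin 1))
      (monomial (pe d).1 (1 : K))
    simp only [AlgHom.coe_comp, Function.comp_apply, AlgEquiv.toAlgHom_eq_coe,
      AlgHom.coe_coe] at h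
    refine h.trans ?_
    show map (Algebra.ofId K (MvPolynomial (Fin 1) K)).toRingHom _ = _
    rw [map_monomial]
    norm_num
  have h2 : φ ((rename Sum.inr) (monomial (pe d).2 c)) = C (monomial (pe d).2 c) := by
    have h := DFunLike.congr_fun (sumAlgEquiv_comp_rename_inr K (Fin n) (Fin 1))
      (monomial (pe d).2 c)
    simp only [AlgHom.coe_comp, Function.comp_apply, AlgEquiv.toAlgHom_eq_coe,
      AlgHom.coe_coe] at h
    refine h.trans ?_
    rfl
  rw [h1, h2, mul_comm, C_mul_monomial, mul_one, one_mul]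

lemma coeff_phi (f : MvPolynomial (Fin n ⊕ Fin 1) K) (α : Fin n →₀ ℕ) (β : Fin 1 →₀ ℕ) :
    ((φ f).coeff α).coeff β = f.coeff ((pe).symm (α, β)) := by
  classical
  induction f using MvPolynomial.induction_on' with
  | monomial d c =>
      rw [phi_monomial, coeff_monomial, coeff_monomial]
      by_cases hd : d = (pe).symm (α, β)
      · subst hd
        rw [if_pos rfl, Equiv.apply_symm_apply]
        rw [if_pos rfl, coeff_monomial, if_pos rfl]
      · rw [if_neg hd]
        have : ¬((pe d).1 = α ∧ (pe d).2 = β) := by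
          intro ⟨h1, h2⟩
          exact hd (by rw [Equiv.eq_symm_apply, Prod.ext_iff]; exact ⟨h1, h2⟩)
        by_cases hα : (pe d).1 = α
        · rw [if_pos hα, coeff_monomial, if_neg (fun h => this ⟨hα, h⟩)]
        · rw [if_neg hα, coeff_zero]
  | add p q hp hq =>
      rw [map_add, coeff_add, coeff_add, coeff_add, hp, hq]

section bridge
variable (mo : MonomialOrder (Fin n ⊕ Fin 1))
    (mx : MonomialOrder (Fin n)) (my : MonomialOrder (Fin 1))
    (horder : ∀ a b : (Fin n ⊕ Fin 1) →₀ ℕ,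
      mo.toSyn a < mo.toSyn b ↔
        (mx.toSyn (Finsupp.sumFinsuppEquivProdFinsupp a).1 <
            mx.toSyn (Finsupp.sumFinsuppEquivProdFinsupp b).1 ∨
          ((Finsupp.sumFinsuppEquivProdFinsupp a).1 =
              (Finsupp.sumFinsuppEquivProdFinsupp b).1 ∧
            my.toSyn (Finsupp.sumFinsuppEquivProdFinsupp a).2 <
              my.toSyn (Finsupp.sumFinsuppEquivProdFinsupp b).2)))

lemma phi_ne_zero {f : MvPolynomial (Fin n ⊕ Fin 1) K} (hf : f ≠ 0) : φ f ≠ 0 := by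
  intro h
  exact hf ((map_eq_zero_iff _ (AlgEquiv.injective _)).mp h)

include horder in
lemma bridge {f : MvPolynomial (Fin n ⊕ Fin 1) K} (hf : f ≠ 0) :
    mdeg mx (φ f) = (pe (mdeg mo f)).1 ∧
    mdeg my (mlc mx (φ f)) = (pe (mdeg mo f)).2 ∧
    mlc my (mlc mx (φ f)) = mlc mo f := by
  set D := mdeg mo f with hD
  have hDc : f.coeff D ≠ 0 := mlc_ne_zero hf
  have hcphi : ∀ e : (Fin n ⊕ Fin 1) →₀ ℕ, ((φ f).coeff (pe e).1).coeff (pe e).2 = f.coeff e := by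
    intro e
    rw [coeff_phi, Equiv.symm_apply_apply]
  have h1 : mdeg mx (φ f) = (pe D).1 := by
    apply mdeg_eq_of
    · intro h
      rw [← hcphi D] at hDc
      rw [h] at hDc
      simp at hDc
    · intro α hα
      rw [mem_support_iff] at hα
      obtain ⟨β, hβ⟩ := MvPolynomial.support_nonempty.mpr hα
      rw [MvPolynomial.mem_support_iff] at hβ
      have he : f.coeff ((pe).symm (α, β)) ≠ 0 := by rw [← coeff_phi]; exact hβ
      have hle := le_mdeg (m := mo) (MvPolynomial.mem_support_iff.mpr he)
      rw [← hD] at hle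
      by_contra hcon
      push_neg at hcon
      have := (horder D ((pe).symm (α, β))).mpr (by
        rw [Equiv.apply_symm_apply]
        exact Or.inl hcon)
      exact absurd hle (not_le.mpr this)
  have h2 : mdeg my ((φ f).coeff (pe D).1) = (pe D).2 := by
    apply mdeg_eq_of
    · rw [hcphi D]; exact hDc
    · intro β hβ
      rw [MvPolynomial.mem_support_iff] at hβ
      have he : f.coeff ((pe).symm ((pe D).1, β)) ≠ 0 := by rw [← coeff_phi]; exact hβ
      have hle := le_mdeg (m := mo) (MvPolynomial.mem_support_iff.mpr he)
      rw [← hD] at hle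
      by_contra hcon
      push_neg at hcon
      have := (horder D ((pe).symm ((pe D).1, β))).mpr (by
        rw [Equiv.apply_symm_apply]
        exact Or.inr ⟨rfl, hcon⟩)
      exact absurd hle (not_le.mpr this)
  refine ⟨h1, ?_, ?_⟩
  · rw [mlc, h1]
    exact h2
  · rw [mlc, mlc, h1, h2, hcphi D]; rw [mlc, ← hD]
end bridge
end phihelp
section more
open MvPolynomial
variable {σ R : Type*} [CommRing R] {m : MonomialOrder σ}

lemma mdeg_sub_lt {u v : MvPolynomial σ R} (hdeg : mdeg m u = mdeg m v)
    (hlc : mlc m u = mlc m v) (hne : u - v ≠ 0) :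
    m.toSyn (mdeg m (u - v)) < m.toSyn (mdeg m u) := by
  have hsupp : mdeg m (u - v) ∈ (u - v).support := mdeg_mem_support hne
  have hle : m.toSyn (mdeg m (u - v)) ≤ m.toSyn (mdeg m u) := by
    rw [mem_support_iff, coeff_sub] at hsupp
    rcases ne_or_eq (coeff (mdeg m (u - v)) u) 0 with h | h
    · exact le_mdeg (mem_support_iff.mpr h)
    · rw [h, zero_sub, neg_ne_zero] at hsupp
      rw [hdeg]
      exact le_mdeg (mem_support_iff.mpr hsupp)
  rcases lt_or_eq_of_le hle with h | h
  · exact h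
  · exfalso
    have : mdeg m (u - v) = mdeg m u := m.toSyn.injective h
    rw [mem_support_iff, this, coeff_sub] at hsupp
    apply hsupp
    rw [show coeff (mdeg m u) u = mlc m u from rfl, hlc, mlc, hdeg]
    ring

lemma eq_C_of_mdeg_eq_zero {w : MvPolynomial σ R} (hw : mdeg m w = 0) :
    w = C (coeff 0 w) := by
  classical
  ext e
  rcases eq_or_ne e 0 with rfl | he
  · simp
  · rw [coeff_C, if_neg (Ne.symm he)]
    by_contra hc
    have := le_mdeg (m := m) (mem_support_iff.mpr hc)
    rw [hw, map_zero] at this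
    have : m.toSyn e = 0 := le_antisymm this (by simpa using bot_le (a := m.toSyn e))
    exact he (by simpa using m.toSyn.injective (this.trans (map_zero m.toSyn).symm))

end more

section fin1
variable (my : MonomialOrder (Fin 1))

lemma fin1_le {u v : Fin 1 →₀ ℕ} (h : my.toSyn u ≤ my.toSyn v) : u ≤ v := by
  rcases le_total (u 0) (v 0) with h' | h'
  · exact Finsupp.le_def.mpr fun i => by rw [Fin.eq_zero i]; exact h'
  · have hvu : v ≤ u := Finsupp.le_def.mpr fun i => by rw [Fin.eq_zero i]; exact h'
    have := my.toSyn_monotone hvu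
    have heq : my.toSyn u = my.toSyn v := le_antisymm h this
    exact le_of_eq (my.toSyn.injective heq)

end fin1
section main
open MvPolynomial
variable {K : Type*} [Field K] {n s : ℕ}

local notation "φ" => MvPolynomial.sumAlgEquiv K (Fin n) (Fin 1)
local notation "pe" => (Finsupp.sumFinsuppEquivProdFinsupp :
  ((Fin n ⊕ Fin 1) →₀ ℕ) ≃ ((Fin n →₀ ℕ) × (Fin 1 →₀ ℕ)))

lemma pe_symm_add (p q : (Fin n →₀ ℕ) × (Fin 1 →₀ ℕ)) :
    (pe).symm (p + q) = (pe).symm p + (pe).symm q := by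
  ext e
  cases e with
  | inl x =>
      rw [Finsupp.add_apply, Finsupp.sumFinsuppEquivProdFinsupp_symm_inl,
        Finsupp.sumFinsuppEquivProdFinsupp_symm_inl, Finsupp.sumFinsuppEquivProdFinsupp_symm_inl]
      rfl
  | inr y =>
      rw [Finsupp.add_apply, Finsupp.sumFinsuppEquivProdFinsupp_symm_inr,
        Finsupp.sumFinsuppEquivProdFinsupp_symm_inr, Finsupp.sumFinsuppEquivProdFinsupp_symm_inr]
      rfl

variable (mo : MonomialOrder (Fin n ⊕ Fin 1))
    (mx : MonomialOrder (Fin n)) (my : MonomialOrder (Fin 1))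
    (horder : ∀ a b : (Fin n ⊕ Fin 1) →₀ ℕ,
      mo.toSyn a < mo.toSyn b ↔
        (mx.toSyn (Finsupp.sumFinsuppEquivProdFinsupp a).1 <
            mx.toSyn (Finsupp.sumFinsuppEquivProdFinsupp b).1 ∨
          ((Finsupp.sumFinsuppEquivProdFinsupp a).1 =
              (Finsupp.sumFinsuppEquivProdFinsupp b).1 ∧
            my.toSyn (Finsupp.sumFinsuppEquivProdFinsupp a).2 <
              my.toSyn (Finsupp.sumFinsuppEquivProdFinsupp b).2)))
    (G : Fin s → MvPolynomial (Fin n ⊕ Fin 1) K) (hG0 : ∀ i, G i ≠ 0)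

include horder hG0 in
lemma dir_easy
    (hstrong : ∀ F ∈ Ideal.map (MvPolynomial.sumAlgEquiv K (Fin n) (Fin 1))
          (Ideal.span (Set.range G)), F ≠ 0 →
        ∃ (h : MvPolynomial (Fin 1) K) (α : Fin n →₀ ℕ) (i : Fin s),
          mlt mx F = MvPolynomial.monomial α h *
            mlt mx (MvPolynomial.sumAlgEquiv K (Fin n) (Fin 1) (G i))) :
    Ideal.span (mlt mo '' {f | f ∈ Ideal.span (Set.range G) ∧ f ≠ 0}) =
        Ideal.span (mlt mo '' Set.range G) := by
  classical
  apply le_antisymm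
  · rw [Ideal.span_le]
    rintro t ⟨f, ⟨hfJ, hf0⟩, rfl⟩
    have hF : φ f ∈ Ideal.map φ (Ideal.span (Set.range G)) := Ideal.mem_map_of_mem _ hfJ
    have hF0 : φ f ≠ 0 := phi_ne_zero hf0
    obtain ⟨h, α, i, hkey⟩ := hstrong (φ f) hF hF0
    obtain ⟨hfx, hfy, hfc⟩ := bridge mo mx my horder hf0
    obtain ⟨hgx, hgy, hgc⟩ := bridge mo mx my horder (hG0 i)
    have hc0 : mlc mx (φ f) ≠ 0 := mlc_ne_zero hF0
    have hci0 : mlc mx (φ (G i)) ≠ 0 := mlc_ne_zero (phi_ne_zero (hG0 i))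
    -- unpack the monomial equation
    rw [mlt, mlt, monomial_mul] at hkey
    rcases (monomial_eq_monomial_iff _ _ _ _).mp hkey with ⟨hdeq, hceq⟩ | ⟨hc, -⟩
    swap
    · exact absurd hc hc0
    have hh0 : h ≠ 0 := by
      intro hh
      rw [hh, zero_mul] at hceq
      exact hc0 hceq
    have hyd : mdeg my (mlc mx (φ f)) = mdeg my h + mdeg my (mlc mx (φ (G i))) := by
      rw [hceq, mdeg_mul hh0 hci0]
    have hyc : mlc my (mlc mx (φ f)) = mlc my h * mlc my (mlc mx (φ (G i))) := by
      rw [hceq, mlc_mul hh0 hci0]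
    -- degree decomposition
    have hDdecomp : mdeg mo f = (pe).symm (α, mdeg my h) + mdeg mo (G i) := by
      have h1 : pe (mdeg mo f) = (α, mdeg my h) + pe (mdeg mo (G i)) := by
        apply Prod.ext
        · rw [Prod.fst_add]
          rw [← hfx, hdeq, ← hgx]
        · rw [Prod.snd_add]
          rw [← hfy, hyd, ← hgy]
      rw [← Equiv.symm_apply_apply pe (mdeg mo f), h1, pe_symm_add, Equiv.symm_apply_apply]
    have hlt : mlt mo f = monomial ((pe).symm (α, mdeg my h)) (mlc my h) * mlt mo (G i) := by
      rw [mlt, mlt, monomial_mul, ← hDdecomp]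
      congr 1
      rw [← hfc, hyc, hgc]
    rw [hlt]
    exact Ideal.mul_mem_left _ _ (Ideal.subset_span ⟨G i, ⟨i, rfl⟩, rfl⟩)
  · rw [Ideal.span_le]
    rintro t ⟨g, ⟨i, rfl⟩, rfl⟩
    exact Ideal.subset_span ⟨G i, ⟨Ideal.subset_span ⟨i, rfl⟩, hG0 i⟩, rfl⟩

include horder hG0 in
lemma dir_hard
    (heq : Ideal.span (mlt mo '' {f | f ∈ Ideal.span (Set.range G) ∧ f ≠ 0}) =
        Ideal.span (mlt mo '' Set.range G)) :
    ∀ F ∈ Ideal.map (MvPolynomial.sumAlgEquiv K (Fin n) (Fin 1))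
          (Ideal.span (Set.range G)), F ≠ 0 →
        ∃ (h : MvPolynomial (Fin 1) K) (α : Fin n →₀ ℕ) (i : Fin s),
          mlt mx F = MvPolynomial.monomial α h *
            mlt mx (MvPolynomial.sumAlgEquiv K (Fin n) (Fin 1) (G i)) := by
  classical
  intro F hF hF0
  set J := Ideal.span (Set.range G) with hJdef
  have hfJ : (φ).symm F ∈ J := by
    have h1 : Ideal.map φ J ≤ Ideal.comap ((φ).symm :
        MvPolynomial (Fin n) (MvPolynomial (Fin 1) K) ≃ₐ[K] MvPolynomial (Fin n ⊕ Fin 1) K) J := by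
      rw [Ideal.map_le_iff_le_comap]
      intro x hx
      rw [Ideal.mem_comap, Ideal.mem_comap, AlgEquiv.symm_apply_apply]
      exact hx
    exact (Ideal.mem_comap).mp (h1 hF)
  set f := (φ).symm F with hfdef
  have hφf : φ f = F := AlgEquiv.apply_symm_apply _ F
  have hf0 : f ≠ 0 := by
    intro hz
    exact hF0 (by rw [← hφf, hz, map_zero])
  set S : Set (MvPolynomial (Fin 1) K) :=
    {p | ∃ g, g ∈ J ∧ g ≠ 0 ∧ mdeg mx (φ g) = mdeg mx F ∧ mlc mx (φ g) = p} with hSdef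
  have hcS : mlc mx F ∈ S := ⟨f, hfJ, hf0, by rw [hφf], by rw [hφf]⟩
  obtain ⟨w, ⟨d, hdS, hdw⟩, hwmin⟩ := (my.wf.wf).has_min
    ((fun p => my.toSyn (mdeg my p)) '' S) ⟨_, Set.mem_image_of_mem _ hcS⟩
  obtain ⟨f₀, hf₀J, hf₀0, hf₀a, hf₀c⟩ := hdS
  have hd0 : d ≠ 0 := by rw [← hf₀c]; exact mlc_ne_zero (phi_ne_zero hf₀0)
  have hminle : ∀ p ∈ S, my.toSyn (mdeg my d) ≤ my.toSyn (mdeg my p) := by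
    intro p hp
    rw [show my.toSyn (mdeg my d) = w from hdw]
    exact not_lt.mp (hwmin _ ⟨p, hp, rfl⟩)
  have div_all : ∀ p ∈ S, d ∣ p := by
    have key : ∀ b : my.syn, ∀ p ∈ S, my.toSyn (mdeg my p) = b → d ∣ p := by
      intro b
      refine (my.wf.wf).induction
        (C := fun b => ∀ p ∈ S, my.toSyn (mdeg my p) = b → d ∣ p) b ?_
      intro t IH p hpS hpt
      obtain ⟨g, hgJ, hg0, hga, hgc⟩ := hpS
      have hp0 : p ≠ 0 := by rw [← hgc]; exact mlc_ne_zero (phi_ne_zero hg0)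
      have hble := fin1_le my (hminle p ⟨g, hgJ, hg0, hga, hgc⟩)
      obtain ⟨δy, hδy⟩ := le_iff_exists_add.mp hble
      have hlcd0 : mlc my d ≠ 0 := mlc_ne_zero hd0
      have hlcp0 : mlc my p ≠ 0 := mlc_ne_zero hp0
      set q : MvPolynomial (Fin 1) K := monomial δy (mlc my p / mlc my d) with hqdef
      have hq0 : q ≠ 0 := by
        rw [hqdef, Ne, monomial_eq_zero]
        exact div_ne_zero hlcp0 hlcd0
      have hqd_deg : mdeg my (q * d) = mdeg my p := by
        rw [mdeg_mul hq0 hd0, hqdef, mdeg_monomial (div_ne_zero hlcp0 hlcd0), hδy, add_comm]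
      have hqd_lc : mlc my (q * d) = mlc my p := by
        rw [mlc_mul hq0 hd0, hqdef, mlc_monomial, div_mul_cancel₀ _ hlcd0]
      rcases eq_or_ne (p - q * d) 0 with hz | hz
      · rw [sub_eq_zero] at hz
        exact ⟨q, hz.trans (mul_comm q d)⟩
      · set M := monomial (0 : Fin n →₀ ℕ) q * φ f₀ with hMdef
        have hM0l : (monomial (0 : Fin n →₀ ℕ) q :
            MvPolynomial (Fin n) (MvPolynomial (Fin 1) K)) ≠ 0 := by
          rw [Ne, monomial_eq_zero]; exact hq0
        have hMdeg : mdeg mx M = mdeg mx F := by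
          rw [hMdef, mdeg_mul hM0l (phi_ne_zero hf₀0), mdeg_monomial hq0, hf₀a, zero_add]
        have hMlc : mlc mx M = q * d := by
          rw [hMdef, mlc_mul hM0l (phi_ne_zero hf₀0), mlc_monomial, hf₀c]
        set g' := g - (monomial ((pe).symm (0, δy)) (mlc my p / mlc my d)) * f₀ with hg'def
        have hφg' : φ g' = φ g - M := by
          rw [hg'def, map_sub, map_mul, phi_monomial, Equiv.apply_symm_apply, hMdef, hqdef]
        have hca : coeff (mdeg mx F) (φ g') = p - q * d := by
          rw [hφg', coeff_sub]
          congr 1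
          · rw [← hga]; exact hgc
          · rw [← hMdeg]; exact hMlc
        have hφg'0 : φ g' ≠ 0 := fun hzz => hz (by rw [← hca, hzz, coeff_zero])
        have hg'0 : g' ≠ 0 := fun hzz => hφg'0 (by rw [hzz, map_zero])
        have hg'J : g' ∈ J := sub_mem hgJ (Ideal.mul_mem_left _ _ hf₀J)
        have hg'a : mdeg mx (φ g') = mdeg mx F := by
          apply mdeg_eq_of (by rw [hca]; exact hz)
          intro e he
          rw [mem_support_iff, hφg', coeff_sub] at he
          rcases ne_or_eq (coeff e (φ g)) 0 with h1 | h1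
          · rw [← hga]; exact le_mdeg (mem_support_iff.mpr h1)
          · rw [h1, zero_sub, neg_ne_zero] at he
            rw [← hMdeg]; exact le_mdeg (mem_support_iff.mpr he)
        have hg'c : mlc mx (φ g') = p - q * d := by rw [mlc, hg'a, hca]
        have hlt : my.toSyn (mdeg my (p - q * d)) < t := by
          rw [← hpt]
          exact mdeg_sub_lt (m := my) hqd_deg.symm hqd_lc.symm hz
        have hdvd' := IH _ hlt (p - q * d) ⟨g', hg'J, hg'0, hg'a, hg'c⟩ rfl
        have h2 := dvd_add hdvd' (Dvd.intro_left q rfl)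
        rwa [sub_add_cancel] at h2
    exact fun p hp => key _ p hp rfl
  -- apply the Gröbner hypothesis to f₀
  have hmlt0 : mlt mo f₀ ∈ Ideal.span (mlt mo '' Set.range G) := by
    rw [← heq]
    exact Ideal.subset_span ⟨f₀, ⟨hf₀J, hf₀0⟩, rfl⟩
  have hspan : Ideal.span (mlt mo '' Set.range G) =
      Ideal.span ((fun e => monomial e (1 : K)) '' Set.range fun i => mdeg mo (G i)) := by
    apply le_antisymm <;> rw [Ideal.span_le]
    · rintro t ⟨g, ⟨i, rfl⟩, rfl⟩
      have hx : mlt mo (G i) = C (mlc mo (G i)) * monomial (mdeg mo (G i)) 1 := by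
        rw [mlt, C_mul_monomial, mul_one]
      rw [hx]
      exact Ideal.mul_mem_left _ _ (Ideal.subset_span ⟨mdeg mo (G i), ⟨i, rfl⟩, rfl⟩)
    · rintro t ⟨e, ⟨i, rfl⟩, rfl⟩
      have hlc0 : mlc mo (G i) ≠ 0 := mlc_ne_zero (hG0 i)
      have hx : (monomial (mdeg mo (G i)) (1 : K)) = C (mlc mo (G i))⁻¹ * mlt mo (G i) := by
        rw [mlt, C_mul_monomial, inv_mul_cancel₀ hlc0]
      show monomial (mdeg mo (G i)) (1 : K) ∈ _
      rw [hx]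
      exact Ideal.mul_mem_left _ _ (Ideal.subset_span ⟨G i, ⟨i, rfl⟩, rfl⟩)
  rw [hspan] at hmlt0
  have hsupp : mdeg mo f₀ ∈ (mlt mo f₀).support := by
    rw [mlt, support_monomial, if_neg (mlc_ne_zero hf₀0)]
    exact Finset.mem_singleton_self _
  obtain ⟨e, ⟨i, rfl⟩, hle⟩ := mem_ideal_span_monomial_image.mp hmlt0 _ hsupp
  obtain ⟨hgx, hgy, hgc⟩ := bridge mo mx my horder (hG0 i)
  obtain ⟨h0x, h0y, h0c⟩ := bridge mo mx my horder hf₀0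
  have hled := Finsupp.le_def.mp hle
  have hxle : (pe (mdeg mo (G i))).1 ≤ (pe (mdeg mo f₀)).1 :=
    Finsupp.le_def.mpr fun x => by
      rw [Finsupp.fst_sumFinsuppEquivProdFinsupp, Finsupp.fst_sumFinsuppEquivProdFinsupp]
      exact hled (Sum.inl x)
  have hyle : (pe (mdeg mo (G i))).2 ≤ (pe (mdeg mo f₀)).2 :=
    Finsupp.le_def.mpr fun x => by
      rw [Finsupp.snd_sumFinsuppEquivProdFinsupp, Finsupp.snd_sumFinsuppEquivProdFinsupp]
      exact hled (Sum.inr x)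
  obtain ⟨δ, hδ⟩ := le_iff_exists_add.mp hxle
  have hgi_J : G i ∈ J := Ideal.subset_span ⟨i, rfl⟩
  have hgφ0 : φ (G i) ≠ 0 := phi_ne_zero (hG0 i)
  have hdegeq : mdeg mx F = δ + mdeg mx (φ (G i)) := by
    rw [hgx, ← hf₀a, h0x, hδ, add_comm]
  have hciS : mlc mx (φ (G i)) ∈ S := by
    have hmon1 : (monomial δ (1 : MvPolynomial (Fin 1) K) :
        MvPolynomial (Fin n) (MvPolynomial (Fin 1) K)) ≠ 0 := by
      rw [Ne, monomial_eq_zero]; exact one_ne_zero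
    have hφprod : φ (monomial ((pe).symm (δ, 0)) 1 * G i) =
        monomial δ (1 : MvPolynomial (Fin 1) K) * φ (G i) := by
      rw [map_mul, phi_monomial, Equiv.apply_symm_apply, monomial_zero', C_1]
    refine ⟨monomial ((pe).symm (δ, 0)) 1 * G i, Ideal.mul_mem_left _ _ hgi_J, ?_, ?_, ?_⟩
    · intro hzz
      rw [hzz, map_zero] at hφprod
      exact mul_ne_zero hmon1 hgφ0 hφprod.symm
    · rw [hφprod, mdeg_mul hmon1 hgφ0, mdeg_monomial one_ne_zero, hdegeq]
    · rw [hφprod, mlc_mul hmon1 hgφ0, mlc_monomial, one_mul]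
  have hdci := div_all _ hciS
  have hci0 : mlc mx (φ (G i)) ≠ 0 := mlc_ne_zero hgφ0
  have hbeq : mdeg my (mlc mx (φ (G i))) = mdeg my d := by
    refine my.toSyn.injective (le_antisymm ?_ (hminle _ hciS))
    have h2 : mdeg my d = (pe (mdeg mo f₀)).2 := by rw [← hf₀c, h0y]
    rw [hgy, h2]
    exact my.toSyn_monotone hyle
  obtain ⟨u, hu⟩ := hdci
  have hu0 : u ≠ 0 := by
    intro hzz
    rw [hzz, mul_zero] at hu
    exact hci0 hu
  have hudeg : mdeg my u = 0 := by
    have h3 := congrArg (mdeg my) hu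
    rw [mdeg_mul hd0 hu0, hbeq] at h3
    exact (left_eq_add.mp h3)
  have huC : u = C (coeff 0 u) := eq_C_of_mdeg_eq_zero (m := my) hudeg
  have hκ0 : coeff 0 u ≠ 0 := by
    intro hzz
    rw [hzz, map_zero] at huC
    exact hu0 huC
  obtain ⟨tq, htq⟩ := div_all _ hcS
  refine ⟨tq * C (coeff 0 u)⁻¹, δ, i, ?_⟩
  rw [mlt, mlt, monomial_mul, hdegeq]
  congr 1
  rw [htq, hu, show d * u = d * C (coeff 0 u) from by rw [← huC]]
  rw [show tq * C (coeff 0 u)⁻¹ * (d * C (coeff 0 u)) =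
    d * tq * (C (coeff 0 u)⁻¹ * C (coeff 0 u)) by ring, ← C_mul,
    inv_mul_cancel₀ hκ0, C_1, mul_one]

end main

/-- over a field `K`, a finite set `G` of nonzero polynomials in
`T = K[y,x₁,…,x_n]` is a Gröbner basis of `J = ⟨G⟩` for an elimination order with
the x-variables larger than `y` if and only if its image is a strong Gröbner
basis of the image of `J` in `Q = (K[y])[x₁,…,x_n]`. -/
theorem stmt18 {K : Type*} [Field K] {n s : ℕ}
    (mo : MonomialOrder (Fin n ⊕ Fin 1))
    (mx : MonomialOrder (Fin n)) (my : MonomialOrder (Fin 1))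
    (horder : ∀ a b : (Fin n ⊕ Fin 1) →₀ ℕ,
      mo.toSyn a < mo.toSyn b ↔
        (mx.toSyn (Finsupp.sumFinsuppEquivProdFinsupp a).1 <
            mx.toSyn (Finsupp.sumFinsuppEquivProdFinsupp b).1 ∨
          ((Finsupp.sumFinsuppEquivProdFinsupp a).1 =
              (Finsupp.sumFinsuppEquivProdFinsupp b).1 ∧
            my.toSyn (Finsupp.sumFinsuppEquivProdFinsupp a).2 <
              my.toSyn (Finsupp.sumFinsuppEquivProdFinsupp b).2)))
    (G : Fin s → MvPolynomial (Fin n ⊕ Fin 1) K) (hG0 : ∀ i, G i ≠ 0) :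
    (Ideal.span (mlt mo '' {f | f ∈ Ideal.span (Set.range G) ∧ f ≠ 0}) =
        Ideal.span (mlt mo '' Set.range G)) ↔
      (∀ F ∈ Ideal.map (MvPolynomial.sumAlgEquiv K (Fin n) (Fin 1))
          (Ideal.span (Set.range G)), F ≠ 0 →
        ∃ (h : MvPolynomial (Fin 1) K) (α : Fin n →₀ ℕ) (i : Fin s),
          mlt mx F = MvPolynomial.monomial α h *
            mlt mx (MvPolynomial.sumAlgEquiv K (Fin n) (Fin 1) (G i))) := by
  exact ⟨fun heq => dir_hard mo mx my horder G hG0 heq,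
    fun hs => dir_easy mo mx my horder G hG0 hs⟩
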